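/- arXiv:0804.4194 — 2 statements merged into one kernel-verified Lean document; each statement's English description precedes it below -/
import Mathlib

section
/- For 0 ≤ r ≤ m, the minimum distance of the binary Reed–Muller code R(r, m) equals 2^{m−r}. -/
open MvPolynomial Finset

def RM (r m : ℕ) : Submodule (ZMod 2) ((Fin m → ZMod 2) → ZMod 2) where
  carrier := {f | ∃ p : MvPolynomial (Fin m) (ZMod 2),
    p.totalDegree ≤ r ∧ ∀ x, MvPolynomial.eval x p = f x}
  zero_mem' := ⟨0, by simp⟩
  add_mem' := by
    rintro f g ⟨p, hp, hpf⟩ ⟨q, hq, hqf⟩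
    exact ⟨p + q, le_trans (MvPolynomial.totalDegree_add p q) (max_le hp hq),
      by intro x; simp [hpf, hqf]⟩
  smul_mem' := by
    rintro c f ⟨p, hp, hpf⟩
    refine ⟨c • p, le_trans (MvPolynomial.totalDegree_smul_le c p) hp, ?_⟩
    intro x
    simp [MvPolynomial.smul_eval, hpf]

/-- substitute `c` for the 0-th variable -/
noncomputable def gsub {m : ℕ} (c : ZMod 2) : Fin (m+1) → MvPolynomial (Fin m) (ZMod 2) :=
  Fin.cases (C c) X

lemma eval_gsub {m : ℕ} (c : ZMod 2) (p : MvPolynomial (Fin (m+1)) (ZMod 2))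
    (x : Fin m → ZMod 2) :
    eval x (aeval (gsub c) p) = eval (Fin.cons c x) p := by
  rw [aeval_def, eval_eval₂]
  have h1 : (eval x).comp (algebraMap (ZMod 2) (MvPolynomial (Fin m) (ZMod 2)))
      = RingHom.id (ZMod 2) := by
    ext a
    simp
  have h2 : (fun s => eval x (gsub c s)) = Fin.cons c x := by
    funext s
    refine Fin.cases ?_ ?_ s <;> simp [gsub]
  rw [h2, show (eval₂ ((eval x).comp (algebraMap (ZMod 2) (MvPolynomial (Fin m) (ZMod 2))))
      (Fin.cons c x) p) = _ from congrArg (eval₂ · (Fin.cons c x) p) h1]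
  rfl

lemma deg_gsub {m : ℕ} (c : ZMod 2) (p : MvPolynomial (Fin (m+1)) (ZMod 2)) :
    (aeval (gsub c) p).totalDegree ≤ p.totalDegree := by
  conv_lhs => rw [p.as_sum]
  rw [map_sum]
  apply totalDegree_finsetSum_le
  intro s hs
  rw [aeval_monomial]
  refine (totalDegree_mul _ _).trans ?_
  have hC : (algebraMap (ZMod 2) (MvPolynomial (Fin m) (ZMod 2)) (coeff s p)).totalDegree = 0 :=
    totalDegree_C _
  rw [hC, zero_add, Finsupp.prod]
  refine (totalDegree_finset_prod _ _).trans ?_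
  refine le_trans ?_ (le_totalDegree hs)
  apply Finset.sum_le_sum
  intro i hi
  refine (totalDegree_pow _ _).trans ?_
  have : (gsub (m := m) c i).totalDegree ≤ 1 := by
    refine Fin.cases ?_ ?_ i <;> simp [gsub]
  calc s i * (gsub (m := m) c i).totalDegree ≤ s i * 1 := Nat.mul_le_mul_left _ this
    _ = s i := Nat.mul_one _

lemma key_decomp {m : ℕ} (p : MvPolynomial (Fin (m+1)) (ZMod 2)) :
    aeval (gsub 0) p + aeval (gsub 1) p =
      ∑ s ∈ p.support.filter (fun s => s 0 ≠ 0),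
        aeval (gsub 1) (monomial s (coeff s p)) := by
  have expand : ∀ c : ZMod 2, aeval (gsub (m := m) c) p
      = ∑ s ∈ p.support, aeval (gsub c) (monomial s (coeff s p)) := by
    intro c
    conv_lhs => rw [p.as_sum]
    exact map_sum _ _ _
  rw [expand, expand, ← Finset.sum_add_distrib, Finset.sum_filter]
  apply Finset.sum_congr rfl
  intro s hs
  by_cases h0 : s 0 = 0
  · rw [if_neg (by simpa using h0)]
    have : aeval (gsub (m := m) 0) (monomial s (coeff s p))
        = aeval (gsub 1) (monomial s (coeff s p)) := by
      rw [aeval_monomial, aeval_monomial]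
      congr 1
      apply Finsupp.prod_congr
      intro i hi
      have : i ≠ 0 := by
        rintro rfl
        exact (Finsupp.mem_support_iff.mp hi) h0
      obtain ⟨j, rfl⟩ := Fin.exists_succ_eq.mpr this
      simp [gsub]
    rw [this, CharTwo.add_self_eq_zero]
  · rw [if_pos h0]
    have : aeval (gsub (m := m) 0) (monomial s (coeff s p)) = 0 := by
      rw [aeval_monomial, Finsupp.prod]
      have h0s : (0 : Fin (m+1)) ∈ s.support := Finsupp.mem_support_iff.mpr h0
      rw [Finset.prod_eq_zero h0s (by simp [gsub, zero_pow h0])]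
      ring
    rw [this, zero_add]

lemma deg_key {m r : ℕ} (p : MvPolynomial (Fin (m+1)) (ZMod 2)) (hp : p.totalDegree ≤ r) :
    (aeval (gsub 0) p + aeval (gsub 1) p).totalDegree ≤ r - 1 := by
  rw [key_decomp]
  apply totalDegree_finsetSum_le
  intro s hs
  rw [Finset.mem_filter] at hs
  obtain ⟨hs, h0⟩ := hs
  rw [aeval_monomial, algebraMap_eq]
  refine (totalDegree_mul _ _).trans ?_
  rw [totalDegree_C, zero_add, Finsupp.prod]
  have h0s : (0 : Fin (m+1)) ∈ s.support := Finsupp.mem_support_iff.mpr h0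
  rw [← Finset.prod_erase_mul _ _ h0s]
  refine (totalDegree_mul _ _).trans ?_
  have hlast : (gsub (m := m) 1 0 ^ s 0).totalDegree = 0 := by
    simp [gsub]
  rw [hlast, add_zero]
  refine (totalDegree_finset_prod _ _).trans ?_
  have hterm : ∀ i ∈ s.support.erase 0, (gsub (m := m) 1 i ^ s i).totalDegree ≤ s i := by
    intro i hi
    obtain ⟨j, rfl⟩ := Fin.exists_succ_eq.mpr (Finset.ne_of_mem_erase hi)
    simp [gsub]
  refine le_trans (Finset.sum_le_sum hterm) ?_
  have hsum : ∑ i ∈ s.support.erase 0, s i + s 0 = s.sum fun _ e => e :=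
    Finset.sum_erase_add _ _ h0s
  have hdeg : (s.sum fun _ e => e) ≤ r := le_trans (le_totalDegree hs) hp
  omega

lemma key_zero {m : ℕ} (p : MvPolynomial (Fin (m+1)) (ZMod 2)) (hp : p.totalDegree = 0) :
    aeval (gsub 0) p + aeval (gsub 1) p = 0 := by
  rw [key_decomp]
  apply Finset.sum_eq_zero
  intro s hs
  rw [Finset.mem_filter] at hs
  obtain ⟨hs, h0⟩ := hs
  exfalso
  have h0s : (0 : Fin (m+1)) ∈ s.support := Finsupp.mem_support_iff.mpr h0
  have : s 0 ≤ s.sum fun _ e => e :=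
    Finset.single_le_sum (f := fun i => s i) (fun _ _ => Nat.zero_le _) h0s
  have hdeg : (s.sum fun _ e => e) ≤ 0 := hp ▸ le_totalDegree hs
  omega

lemma zmod2_cases : ∀ a : ZMod 2, a = 0 ∨ a = 1 := by decide

lemma card_split {m : ℕ} (f : (Fin (m+1) → ZMod 2) → ZMod 2) :
    (univ.filter fun x => f x ≠ 0).card =
      (univ.filter fun y : Fin m → ZMod 2 => f (Fin.cons 0 y) ≠ 0).card +
      (univ.filter fun y : Fin m → ZMod 2 => f (Fin.cons 1 y) ≠ 0).card := by
  have hsub : ∀ c : ZMod 2,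
      (univ.filter fun x : Fin (m+1) → ZMod 2 => f x ≠ 0 ∧ x 0 = c).card
      = (univ.filter fun y : Fin m → ZMod 2 => f (Fin.cons c y) ≠ 0).card := by
    intro c
    apply Finset.card_nbij' (i := fun x => Fin.tail x) (j := fun y => Fin.cons c y)
    · intro x hx
      simp only [mem_coe, mem_filter, mem_univ, true_and] at hx ⊢
      rw [← hx.2, Fin.cons_self_tail]
      exact hx.1
    · intro y hy
      simp only [mem_coe, mem_filter, mem_univ, true_and] at hy ⊢
      exact ⟨hy, Fin.cons_zero _ _⟩
    · intro x hx
      simp only [mem_coe, mem_filter, mem_univ, true_and] at hx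
      rw [← hx.2]
      exact Fin.cons_self_tail x
    · intro y _
      exact Fin.tail_cons _ _
  have hunion : univ.filter (fun x : Fin (m+1) → ZMod 2 => f x ≠ 0)
      = (univ.filter fun x => f x ≠ 0 ∧ x 0 = 0) ∪ (univ.filter fun x => f x ≠ 0 ∧ x 0 = 1) := by
    ext x
    simp only [mem_filter, mem_union, mem_univ, true_and]
    rcases zmod2_cases (x 0) with h | h <;> tauto
  have hdisj : Disjoint (univ.filter fun x : Fin (m+1) → ZMod 2 => f x ≠ 0 ∧ x 0 = 0)
      (univ.filter fun x => f x ≠ 0 ∧ x 0 = 1) := by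
    rw [Finset.disjoint_left]
    intro x hx hx'
    simp only [mem_filter, mem_univ, true_and] at hx hx'
    exact absurd (hx.2 ▸ hx'.2) (by decide)
  rw [hunion, Finset.card_union_of_disjoint hdisj, hsub 0, hsub 1]

lemma RM_lb (m : ℕ) : ∀ r, r ≤ m → ∀ p : MvPolynomial (Fin m) (ZMod 2), p.totalDegree ≤ r →
    ∀ x0, MvPolynomial.eval x0 p ≠ 0 →
    2 ^ (m - r) ≤ (univ.filter fun x : Fin m → ZMod 2 => eval x p ≠ 0).card := by
  induction m with
  | zero =>
    intro r hr p hp x0 hx0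
    rw [Nat.zero_sub, pow_zero]
    exact Finset.card_pos.mpr ⟨x0, Finset.mem_filter.mpr ⟨Finset.mem_univ _, hx0⟩⟩
  | succ m ih =>
    intro r hr p hp x0 hx0
    by_cases hrm : r = m + 1
    · subst hrm
      rw [Nat.sub_self, pow_zero]
      exact Finset.card_pos.mpr ⟨x0, Finset.mem_filter.mpr ⟨Finset.mem_univ _, hx0⟩⟩
    have hr' : r ≤ m := by omega
    set q0 := aeval (gsub 0) p with hq0
    set q1 := aeval (gsub 1) p with hq1
    have hcount : (univ.filter fun x : Fin (m+1) → ZMod 2 => eval x p ≠ 0).card =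
        (univ.filter fun y : Fin m → ZMod 2 => eval y q0 ≠ 0).card +
        (univ.filter fun y : Fin m → ZMod 2 => eval y q1 ≠ 0).card := by
      rw [card_split (fun x => eval x p)]
      congr 1 <;> refine congrArg Finset.card (Finset.filter_congr ?_) <;> intro y _ <;>
        simp only [hq0, hq1, eval_gsub]
    rw [hcount]
    have hdq0 : q0.totalDegree ≤ r := le_trans (deg_gsub 0 p) hp
    have hdq1 : q1.totalDegree ≤ r := le_trans (deg_gsub 1 p) hp
    -- the witness x0 gives a nonzero point for q0 or q1
    have hwit : eval (Fin.tail x0) q0 ≠ 0 ∨ eval (Fin.tail x0) q1 ≠ 0 := by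
      rcases zmod2_cases (x0 0) with h | h
      · left
        rw [hq0, eval_gsub, show Fin.cons (0 : ZMod 2) (Fin.tail x0) = x0 by
          rw [← h]; exact Fin.cons_self_tail x0]
        exact hx0
      · right
        rw [hq1, eval_gsub, show Fin.cons (1 : ZMod 2) (Fin.tail x0) = x0 by
          rw [← h]; exact Fin.cons_self_tail x0]
        exact hx0
    by_cases h0 : ∀ y, eval y q0 = 0 <;> by_cases h1 : ∀ y, eval y q1 = 0
    · rcases hwit with hw | hw
      · exact absurd (h0 _) hw
      · exact absurd (h1 _) hw
    · -- q0 ≡ 0, q1 has a nonzero point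
      push_neg at h1
      obtain ⟨y1, hy1⟩ := h1
      have hrpos : 1 ≤ r := by
        by_contra hcon
        have hr0 : r = 0 := by omega
        have hz : q0 + q1 = 0 := key_zero p (by omega)
        have : eval y1 q1 = 0 := by
          have := congrArg (eval y1) hz
          simpa [h0 y1] using this
        exact hy1 this
      have hdsum : (q0 + q1).totalDegree ≤ r - 1 := deg_key p hp
      have hev : eval y1 (q0 + q1) ≠ 0 := by simpa [h0 y1] using hy1
      have := ih (r-1) (by omega) (q0 + q1) hdsum y1 hev
      have heq : (univ.filter fun y : Fin m → ZMod 2 => eval y (q0 + q1) ≠ 0)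
          = univ.filter fun y => eval y q1 ≠ 0 := by
        apply Finset.filter_congr
        intro y _
        simp [h0 y]
      rw [heq] at this
      calc 2 ^ (m + 1 - r) = 2 ^ (m - (r-1)) := by congr 1; omega
        _ ≤ (univ.filter fun y : Fin m → ZMod 2 => eval y q1 ≠ 0).card := this
        _ ≤ _ := Nat.le_add_left _ _
    · -- q1 ≡ 0, q0 has a nonzero point
      push_neg at h0
      obtain ⟨y0, hy0⟩ := h0
      have hrpos : 1 ≤ r := by
        by_contra hcon
        have hz : q0 + q1 = 0 := key_zero p (by omega)
        have : eval y0 q0 = 0 := by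
          have := congrArg (eval y0) hz
          simpa [h1 y0] using this
        exact hy0 this
      have hdsum : (q0 + q1).totalDegree ≤ r - 1 := deg_key p hp
      have hev : eval y0 (q0 + q1) ≠ 0 := by simpa [h1 y0] using hy0
      have := ih (r-1) (by omega) (q0 + q1) hdsum y0 hev
      have heq : (univ.filter fun y : Fin m → ZMod 2 => eval y (q0 + q1) ≠ 0)
          = univ.filter fun y => eval y q0 ≠ 0 := by
        apply Finset.filter_congr
        intro y _
        simp [h1 y]
      rw [heq] at this
      calc 2 ^ (m + 1 - r) = 2 ^ (m - (r-1)) := by congr 1; omega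
        _ ≤ (univ.filter fun y : Fin m → ZMod 2 => eval y q0 ≠ 0).card := this
        _ ≤ _ := Nat.le_add_right _ _
    · push_neg at h0 h1
      obtain ⟨y0, hy0⟩ := h0
      obtain ⟨y1, hy1⟩ := h1
      have hc0 := ih r hr' q0 hdq0 y0 hy0
      have hc1 := ih r hr' q1 hdq1 y1 hy1
      have : 2 ^ (m + 1 - r) = 2 ^ (m - r) + 2 ^ (m - r) := by
        rw [show m + 1 - r = (m - r) + 1 by omega, pow_succ]
        omega
      omega

lemma count_ones (r m : ℕ) (h : r ≤ m) :
    (univ.filter fun x : Fin m → ZMod 2 => ∀ i : Fin m, (i : ℕ) < r → x i = 1).card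
      = 2 ^ (m - r) := by
  rw [← Fintype.card_subtype]
  have e : {x : Fin m → ZMod 2 // ∀ i : Fin m, (i : ℕ) < r → x i = 1}
      ≃ ({i : Fin m // ¬ (i : ℕ) < r} → ZMod 2) :=
    { toFun := fun x i => x.1 i.1
      invFun := fun y => ⟨fun i => if hi : (i : ℕ) < r then 1 else y ⟨i, hi⟩,
        fun i hi => dif_pos hi⟩
      left_inv := by
        rintro ⟨x, hx⟩
        apply Subtype.ext
        funext i
        dsimp only
        split_ifs with hi
        · exact (hx i hi).symm
        · rfl
      right_inv := by
        intro y
        funext i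
        dsimp only
        rw [dif_neg i.2] }
  rw [Fintype.card_congr e, Fintype.card_fun, ZMod.card]
  congr 1
  rw [Fintype.card_subtype_compl]
  have e2 : {i : Fin m // (i : ℕ) < r} ≃ Fin r :=
    { toFun := fun i => ⟨i.1, i.2⟩
      invFun := fun j => ⟨⟨j.1, lt_of_lt_of_le j.2 h⟩, j.2⟩
      left_inv := fun i => by ext; rfl
      right_inv := fun j => by ext; rfl }
  rw [Fintype.card_congr e2, Fintype.card_fin, Fintype.card_fin]

/-- The minimum distance of the binary Reed–Muller code `R(r,m)` equals `2^(m-r)`. -/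
theorem RM_minDist (r m : ℕ) (h : r ≤ m) :
    (∀ f ∈ RM r m, f ≠ 0 → 2 ^ (m - r) ≤ hammingNorm f) ∧
    ∃ f ∈ RM r m, f ≠ 0 ∧ hammingNorm f = 2 ^ (m - r) := by
  constructor
  · rintro f ⟨p, hp, hpf⟩ hf
    obtain ⟨x0, hx0⟩ : ∃ x0, f x0 ≠ 0 := by
      by_contra hcon
      push_neg at hcon
      exact hf (funext hcon)
    have hlb := RM_lb m r h p hp x0 (by rw [hpf]; exact hx0)
    have heq : (univ.filter fun x : Fin m → ZMod 2 => eval x p ≠ 0)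
        = univ.filter fun x => f x ≠ 0 := by
      apply Finset.filter_congr
      intro x _
      rw [hpf]
    rw [heq] at hlb
    exact hlb
  · refine ⟨fun x => ∏ i : Fin r, x (Fin.castLE h i),
      ⟨∏ i : Fin r, X (Fin.castLE h i), ?_, ?_⟩, ?_, ?_⟩
    · refine (totalDegree_finset_prod _ _).trans ?_
      simp [totalDegree_X]
    · intro x
      simp
    · intro h0
      have := congrFun h0 (fun _ => 1)
      simp at this
    · have hiff : ∀ x : Fin m → ZMod 2,
          ((∏ i : Fin r, x (Fin.castLE h i)) ≠ 0) ↔ ∀ i : Fin m, (i : ℕ) < r → x i = 1 := by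
        intro x
        rw [Finset.prod_ne_zero_iff]
        constructor
        · intro hx i hi
          have hcast : Fin.castLE h ⟨(i : ℕ), hi⟩ = i := by ext; rfl
          have := hx ⟨(i : ℕ), hi⟩ (Finset.mem_univ _)
          rw [hcast] at this
          rcases zmod2_cases (x i) with h' | h'
          · exact absurd h' this
          · exact h'
        · intro hx i _
          rw [hx (Fin.castLE h i) i.2]
          exact one_ne_zero
      show (univ.filter fun x : Fin m → ZMod 2 => (∏ i : Fin r, x (Fin.castLE h i)) ≠ 0).card
        = 2 ^ (m - r)
      rw [Finset.filter_congr (fun x _ => iff_of_eq (propext (hiff x)))]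
      exact count_ones r m h
end

section
/- For 0 ≤ r ≤ m−1, the dual code of the binary Reed–Muller code R(r, m) with respect to the standard bilinear form on F_2^{2^m} is R(m−r−1, m). -/
def dualCode {R ι : Type*} [CommRing R] [Fintype ι] (C : Submodule R (ι → R)) :
    Submodule R (ι → R) where
  carrier := {y | ∀ x ∈ C, ∑ i, x i * y i = 0}
  zero_mem' := by intro x hx; simp
  add_mem' := by
    intro a b ha hb x hx
    simp only [Set.mem_setOf_eq] at ha hb
    simp [Pi.add_apply, mul_add, Finset.sum_add_distrib, ha x hx, hb x hx]
  smul_mem' := by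
    intro c a ha x hx
    simp only [Set.mem_setOf_eq] at ha
    simp only [Pi.smul_apply, smul_eq_mul, mul_left_comm, ← Finset.mul_sum, ha x hx, mul_zero]


open MvPolynomial Finset

-- sum over all points of eval of a low-degree polynomial vanishes
lemma sum_eval_zero {m : ℕ} (p : MvPolynomial (Fin m) (ZMod 2))
    (hp : p.totalDegree < m) : ∑ x : Fin m → ZMod 2, MvPolynomial.eval x p = 0 := by
  have : ∀ x : Fin m → ZMod 2, MvPolynomial.eval x p
      = ∑ d ∈ p.support, MvPolynomial.eval x (MvPolynomial.monomial d (p.coeff d)) := by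
    intro x; conv_lhs => rw [p.as_sum]
    rw [map_sum]
  simp_rw [this]
  rw [Finset.sum_comm]
  refine Finset.sum_eq_zero fun d hd => ?_
  have hdeg : (∑ i, d i) < m := by
    have h1 : d.sum (fun _ k => k) ≤ p.totalDegree := MvPolynomial.le_totalDegree hd
    have h2 : d.sum (fun _ k => k) = ∑ i, d i := Finsupp.sum_fintype _ _ (fun _ => rfl)
    omega
  obtain ⟨i, hi⟩ : ∃ i, d i = 0 := by
    by_contra hc
    push_neg at hc
    have : ∀ i : Fin m, 1 ≤ d i := fun i => Nat.one_le_iff_ne_zero.2 (hc i)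
    have := Finset.sum_le_sum (fun i (_ : i ∈ Finset.univ) => this i)
    simp at this
    omega
  have : ∀ x : Fin m → ZMod 2, MvPolynomial.eval x (MvPolynomial.monomial d (p.coeff d))
      = p.coeff d * ∏ j, x j ^ d j := by
    intro x
    rw [MvPolynomial.eval_monomial, Finsupp.prod_pow]
  simp_rw [this, ← Finset.mul_sum]
  rw [← Fintype.prod_sum (fun j (b : ZMod 2) => b ^ d j)]
  rw [Finset.prod_eq_zero (Finset.mem_univ i) (by rw [hi]; decide), mul_zero]

lemma zmod2_delta (u v : ZMod 2) : u + v + 1 = if u = v then 1 else 0 := by revert u v; decide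

/-- The dual of the Reed–Muller code `R(r,m)` is `R(m-r-1,m)`, for `0 ≤ r ≤ m-1`. -/
theorem RM_dual (r m : ℕ) (h : r + 1 ≤ m) :
    dualCode (RM r m) = RM (m - r - 1) m := by
  ext y
  constructor
  · intro hy
    have hy' : ∀ x ∈ RM r m, ∑ i, x i * y i = 0 := hy
    refine ⟨∑ S : Finset (Fin m),
      (∑ a : Fin m → ZMod 2, y a * ∏ i ∈ Sᶜ, (a i + 1)) •
        ∏ i ∈ S, (MvPolynomial.X i : MvPolynomial (Fin m) (ZMod 2)), ?_, ?_⟩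
    · refine le_trans (MvPolynomial.totalDegree_finset_sum _ _) (Finset.sup_le fun S _ => ?_)
      by_cases hc : (∑ a : Fin m → ZMod 2, y a * ∏ i ∈ Sᶜ, (a i + 1)) = 0
      · rw [hc, zero_smul]; simp
      · refine le_trans (MvPolynomial.totalDegree_smul_le _ _) ?_
        refine le_trans (MvPolynomial.totalDegree_finset_prod _ _) ?_
        have hcard : S.card ≤ m - r - 1 := by
          by_contra hS
          apply hc
          have hmem : (fun a : Fin m → ZMod 2 => ∏ i ∈ Sᶜ, (a i + 1)) ∈ RM r m := by
            refine ⟨∏ i ∈ Sᶜ, (MvPolynomial.X i + 1), ?_, ?_⟩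
            · refine le_trans (MvPolynomial.totalDegree_finset_prod _ _) ?_
              have h1 : ∀ i : Fin m,
                  (MvPolynomial.X i + (1 : MvPolynomial (Fin m) (ZMod 2))).totalDegree ≤ 1 := by
                intro i
                refine le_trans (MvPolynomial.totalDegree_add _ _) ?_
                simp [MvPolynomial.totalDegree_X, MvPolynomial.totalDegree_one]
              refine le_trans (Finset.sum_le_sum fun i _ => h1 i) ?_
              have hcu := Finset.card_le_univ S
              simp only [Finset.sum_const, smul_eq_mul, mul_one, Finset.card_compl,
                Fintype.card_fin] at hcu ⊢
              omega
            · intro x; simp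
          have h0 := hy' _ hmem
          rw [← h0]
          exact Finset.sum_congr rfl fun a _ => mul_comm _ _
        calc ∑ i ∈ S, (MvPolynomial.X i : MvPolynomial (Fin m) (ZMod 2)).totalDegree
            = S.card := by simp [MvPolynomial.totalDegree_X]
          _ ≤ m - r - 1 := hcard
    · intro x
      rw [map_sum]
      simp only [MvPolynomial.smul_eval, map_prod, MvPolynomial.eval_X, smul_eq_mul]
      have key : ∀ a : Fin m → ZMod 2,
          ∑ S : Finset (Fin m), (∏ i ∈ Sᶜ, (a i + 1)) * ∏ i ∈ S, x i
            = if a = x then 1 else 0 := by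
        intro a
        have hrw : ∀ S : Finset (Fin m),
            (∏ i ∈ Sᶜ, (a i + 1)) * ∏ i ∈ S, x i
              = (∏ i ∈ S, x i) * ∏ i ∈ Sᶜ, (a i + 1) := fun S => mul_comm _ _
        simp_rw [hrw]
        rw [← Fintype.prod_add]
        have hfac : ∀ i, x i + (a i + 1) = if x i = a i then 1 else 0 := by
          intro i; rw [← add_assoc, zmod2_delta]
        simp_rw [hfac]
        rw [Fintype.prod_boole]
        by_cases hax : a = x
        · subst hax; simp
        · rw [if_neg hax, if_neg]
          intro hall
          exact hax (funext fun i => (hall i).symm)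
      calc ∑ S : Finset (Fin m),
            (∑ a : Fin m → ZMod 2, y a * ∏ i ∈ Sᶜ, (a i + 1)) * ∏ i ∈ S, x i
          = ∑ a : Fin m → ZMod 2, y a *
              ∑ S : Finset (Fin m), (∏ i ∈ Sᶜ, (a i + 1)) * ∏ i ∈ S, x i := by
            simp_rw [Finset.sum_mul, Finset.mul_sum]
            rw [Finset.sum_comm]
            exact Finset.sum_congr rfl fun a _ => Finset.sum_congr rfl fun S _ => by ring
        _ = y x := by
            simp_rw [key]
            simp
  · rintro ⟨q, hq, hqy⟩ f hf
    obtain ⟨p, hp, hpf⟩ := hf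
    have hrw : ∑ i : Fin m → ZMod 2, f i * y i
        = ∑ x : Fin m → ZMod 2, MvPolynomial.eval x (p * q) := by
      refine Finset.sum_congr rfl fun i _ => ?_
      rw [map_mul, hpf, hqy]
    rw [hrw]
    apply sum_eval_zero
    have := MvPolynomial.totalDegree_mul p q
    omega
end
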